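/- Let Λ = ∑_{m∈I} λ_m f_{m0} be a unit vector with I ⊂ ℕ finite, and let a be a double sequence whose derivative coefficients α, β (defined from a by the matrix-base recursions) satisfy |α_{pq}| ≤ 1/√2 and |β_{pq}| ≤ 1/√2 for all p,q. Then there is a constant C = C(I, n, θ), independent of a, such that |2πθ·∑_{p,q∈I} a_{pq} λ_p* λ_q − a_{nn}| ≤ C for every n ∈ ℕ. Consequently d(ω_Λ, ω_n) < +∞. -/

import Mathlib

open Real Complex Finset

theorem finite_combination_state_finite_distance (θ : ℝ) (hθ : 0 < θ)
    (I : Finset ℕ) (lam : ℕ → ℂ)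
    (hunit : 2 * π * θ * ∑ m ∈ I, ‖lam m‖ ^ 2 = 1) (n : ℕ) :
    ∃ C : ℝ, ∀ a α β : ℕ → ℕ → ℂ,
      (∀ p q : ℕ, α (p + 1) q =
        (Real.sqrt (((q : ℝ) + 1) / θ) : ℂ) * a (p + 1) (q + 1) -
        (Real.sqrt (((p : ℝ) + 1) / θ) : ℂ) * a p q) →
      (∀ q : ℕ, α 0 q = (Real.sqrt (((q : ℝ) + 1) / θ) : ℂ) * a 0 (q + 1)) →
      (∀ p q : ℕ, β p (q + 1) =
        (Real.sqrt (((p : ℝ) + 1) / θ) : ℂ) * a (p + 1) (q + 1) -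
        (Real.sqrt (((q : ℝ) + 1) / θ) : ℂ) * a p q) →
      (∀ p : ℕ, β p 0 = (Real.sqrt (((p : ℝ) + 1) / θ) : ℂ) * a (p + 1) 0) →
      (∀ p q : ℕ, ‖α p q‖ ≤ 1 / Real.sqrt 2) →
      (∀ p q : ℕ, ‖β p q‖ ≤ 1 / Real.sqrt 2) →
      ‖(2 * π * θ : ℂ) * ∑ p ∈ I, ∑ q ∈ I,
          (starRingEnd ℂ) (lam p) * lam q * a p q - a n n‖ ≤ C := by
  refine ⟨2 * π * θ * ∑ p ∈ I, ∑ q ∈ I,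
      ‖lam p‖ * ‖lam q‖ * (Real.sqrt θ * (min p q + 1)) +
      Real.sqrt θ * (n + 1), ?_⟩
  intro a α β hα hα0 hβ hβ0 hαb hβb
  set b : ℕ → ℕ → ℂ := fun p q => a p q - (if p = q then a 0 0 else 0) with hb
  have hθ0 : (0:ℝ) ≤ θ := hθ.le
  -- scaling helper
  have hs : ∀ x : ℝ, 0 ≤ x → ∀ z w : ℂ, ((Real.sqrt (x/θ) : ℝ) : ℂ) * z = w →
      Real.sqrt x * ‖z‖ = Real.sqrt θ * ‖w‖ := by
    intro x hx z w hzw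
    have h1 : ‖w‖ = Real.sqrt (x/θ) * ‖z‖ := by
      rw [← hzw, norm_mul, Complex.norm_real, Real.norm_eq_abs,
        _root_.abs_of_nonneg (Real.sqrt_nonneg _)]
    have h2 : Real.sqrt θ * Real.sqrt (x/θ) = Real.sqrt x := by
      rw [← Real.sqrt_mul hθ0]
      congr 1
      field_simp
    rw [h1, ← mul_assoc, h2]
  have half : (1:ℝ) / Real.sqrt 2 ≤ 1 := by
    rw [div_le_one (by positivity)]
    nlinarith [Real.sq_sqrt (by norm_num : (2:ℝ) ≥ 0), Real.sqrt_nonneg 2]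
  -- base bound helper: if sqrt((x)/θ) * z = w with 1 ≤ x and ‖w‖ ≤ 1 then ‖z‖ ≤ √θ
  have hbase : ∀ x : ℝ, 1 ≤ x → ∀ z w : ℂ, ((Real.sqrt (x/θ) : ℝ) : ℂ) * z = w →
      ‖w‖ ≤ 1 → ‖z‖ ≤ Real.sqrt θ := by
    intro x hx z w hzw hw
    have h := hs x (by linarith) z w hzw
    have h1 : (1:ℝ) ≤ Real.sqrt x := by
      rw [show (1:ℝ) = Real.sqrt 1 by simp]
      exact Real.sqrt_le_sqrt hx
    nlinarith [norm_nonneg z, Real.sqrt_nonneg θ, norm_nonneg w]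
  have hbound : ∀ p q, ‖b p q‖ ≤ Real.sqrt θ * (min p q + 1) := by
    intro p
    induction p with
    | zero =>
      intro q
      cases q with
      | zero => simp [hb]
      | succ q =>
        have h0 : b 0 (q+1) = a 0 (q+1) := by simp [hb]
        have heq : ((Real.sqrt (((q:ℝ)+1)/θ) : ℝ) : ℂ) * a 0 (q+1) = α 0 q := (hα0 q).symm
        have := hbase ((q:ℝ)+1) (by push_cast; linarith [(Nat.cast_nonneg q : (0:ℝ) ≤ q)]) _ _ heq
          ((hαb 0 q).trans half)
        rw [h0]
        simpa using this
    | succ p ih =>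
      intro q
      cases q with
      | zero =>
        have h0 : b (p+1) 0 = a (p+1) 0 := by simp [hb]
        have heq : ((Real.sqrt (((p:ℝ)+1)/θ) : ℝ) : ℂ) * a (p+1) 0 = β p 0 := (hβ0 p).symm
        have := hbase ((p:ℝ)+1) (by push_cast; linarith [(Nat.cast_nonneg p : (0:ℝ) ≤ p)]) _ _ heq
          ((hβb p 0).trans half)
        rw [h0]
        simpa using this
      | succ q =>
        have hmin : ((min (p+1) (q+1) : ℕ) : ℝ) = ((min p q : ℕ) : ℝ) + 1 := by
          have h : min (p+1) (q+1) = min p q + 1 := by omega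
          rw [h]; push_cast; ring
        have ihq := ih q
        rcases le_total p q with hpq | hqp
        · -- use α recursion
          have key : ((Real.sqrt (((q:ℝ)+1)/θ) : ℝ) : ℂ) * b (p+1) (q+1)
              = α (p+1) q + ((Real.sqrt (((p:ℝ)+1)/θ) : ℝ) : ℂ) * b p q := by
            simp only [hb]
            rw [hα p q]
            by_cases hpq' : p = q
            · subst hpq'; simp; ring
            · have : ¬ (p + 1 = q + 1) := by omega
              simp only [if_neg hpq', if_neg this]
              ring
          have h := hs ((q:ℝ)+1) (by positivity) _ _ key
          have hw : ‖α (p+1) q + ((Real.sqrt (((p:ℝ)+1)/θ) : ℝ) : ℂ) * b p q‖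
              ≤ 1 + Real.sqrt (((p:ℝ)+1)/θ) * ‖b p q‖ := by
            refine (norm_add_le _ _).trans ?_
            gcongr
            · exact (hαb (p+1) q).trans half
            · rw [norm_mul, Complex.norm_real, Real.norm_eq_abs,
                _root_.abs_of_nonneg (Real.sqrt_nonneg _)]
          -- √θ * √((p+1)/θ) = √(p+1)
          have hprod : Real.sqrt θ * Real.sqrt (((p:ℝ)+1)/θ) = Real.sqrt ((p:ℝ)+1) := by
            rw [← Real.sqrt_mul hθ0]; congr 1; field_simp
          have hq1 : (1:ℝ) ≤ Real.sqrt ((q:ℝ)+1) := by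
            have h1 : Real.sqrt 1 ≤ Real.sqrt ((q:ℝ)+1) :=
              Real.sqrt_le_sqrt (by linarith [(Nat.cast_nonneg q : (0:ℝ) ≤ q)])
            simpa using h1
          have hple : Real.sqrt ((p:ℝ)+1) ≤ Real.sqrt ((q:ℝ)+1) := by
            apply Real.sqrt_le_sqrt
            have : (p:ℝ) ≤ q := by exact_mod_cast hpq
            linarith
          rw [hmin]
          have hq0 : (0:ℝ) < Real.sqrt ((q:ℝ)+1) := by linarith
          rw [← mul_le_mul_iff_right₀ hq0]
          rw [h]
          calc Real.sqrt θ * ‖α (p+1) q + ((Real.sqrt (((p:ℝ)+1)/θ) : ℝ) : ℂ) * b p q‖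
              ≤ Real.sqrt θ * (1 + Real.sqrt (((p:ℝ)+1)/θ) * ‖b p q‖) := by
                gcongr
            _ = Real.sqrt θ + Real.sqrt ((p:ℝ)+1) * ‖b p q‖ := by
                rw [mul_add, mul_one, ← mul_assoc, hprod]
            _ ≤ Real.sqrt ((q:ℝ)+1) * Real.sqrt θ
                + Real.sqrt ((q:ℝ)+1) * (Real.sqrt θ * ((min p q : ℕ) + 1)) := by
                refine add_le_add ?_ ?_
                · nlinarith [Real.sqrt_nonneg θ]
                · exact mul_le_mul hple ihq (norm_nonneg _) (Real.sqrt_nonneg _)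
            _ = Real.sqrt ((q:ℝ)+1) * (Real.sqrt θ * (((min p q : ℕ) : ℝ) + 1 + 1)) := by
                ring
        · -- use β recursion
          have key : ((Real.sqrt (((p:ℝ)+1)/θ) : ℝ) : ℂ) * b (p+1) (q+1)
              = β p (q+1) + ((Real.sqrt (((q:ℝ)+1)/θ) : ℝ) : ℂ) * b p q := by
            simp only [hb]
            rw [hβ p q]
            by_cases hpq' : p = q
            · subst hpq'; simp; ring
            · have : ¬ (p + 1 = q + 1) := by omega
              simp only [if_neg hpq', if_neg this]
              ring
          have h := hs ((p:ℝ)+1) (by positivity) _ _ key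
          have hw : ‖β p (q+1) + ((Real.sqrt (((q:ℝ)+1)/θ) : ℝ) : ℂ) * b p q‖
              ≤ 1 + Real.sqrt (((q:ℝ)+1)/θ) * ‖b p q‖ := by
            refine (norm_add_le _ _).trans ?_
            gcongr
            · exact (hβb p (q+1)).trans half
            · rw [norm_mul, Complex.norm_real, Real.norm_eq_abs,
                _root_.abs_of_nonneg (Real.sqrt_nonneg _)]
          have hprod : Real.sqrt θ * Real.sqrt (((q:ℝ)+1)/θ) = Real.sqrt ((q:ℝ)+1) := by
            rw [← Real.sqrt_mul hθ0]; congr 1; field_simp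
          have hp1 : (1:ℝ) ≤ Real.sqrt ((p:ℝ)+1) := by
            have h1 : Real.sqrt 1 ≤ Real.sqrt ((p:ℝ)+1) :=
              Real.sqrt_le_sqrt (by linarith [(Nat.cast_nonneg p : (0:ℝ) ≤ p)])
            simpa using h1
          have hple : Real.sqrt ((q:ℝ)+1) ≤ Real.sqrt ((p:ℝ)+1) := by
            apply Real.sqrt_le_sqrt
            have : (q:ℝ) ≤ p := by exact_mod_cast hqp
            linarith
          rw [hmin]
          have hp0 : (0:ℝ) < Real.sqrt ((p:ℝ)+1) := by linarith
          rw [← mul_le_mul_iff_right₀ hp0]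
          rw [h]
          calc Real.sqrt θ * ‖β p (q+1) + ((Real.sqrt (((q:ℝ)+1)/θ) : ℝ) : ℂ) * b p q‖
              ≤ Real.sqrt θ * (1 + Real.sqrt (((q:ℝ)+1)/θ) * ‖b p q‖) := by
                gcongr
            _ = Real.sqrt θ + Real.sqrt ((q:ℝ)+1) * ‖b p q‖ := by
                rw [mul_add, mul_one, ← mul_assoc, hprod]
            _ ≤ Real.sqrt ((p:ℝ)+1) * Real.sqrt θ
                + Real.sqrt ((p:ℝ)+1) * (Real.sqrt θ * ((min p q : ℕ) + 1)) := by
                refine add_le_add ?_ ?_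
                · nlinarith [Real.sqrt_nonneg θ]
                · exact mul_le_mul hple ihq (norm_nonneg _) (Real.sqrt_nonneg _)
            _ = Real.sqrt ((p:ℝ)+1) * (Real.sqrt θ * (((min p q : ℕ) : ℝ) + 1 + 1)) := by
                ring
  -- final assembly
  have hconj : ∀ p : ℕ, (starRingEnd ℂ) (lam p) * lam p = ((‖lam p‖^2 : ℝ) : ℂ) := by
    intro p
    rw [← Complex.normSq_eq_conj_mul_self]
    norm_cast
    simp [Complex.normSq_eq_norm_sq]
  have habe : ∀ p q, a p q = b p q + (if p = q then a 0 0 else 0) := by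
    intro p q; simp [hb]
  have hdiag : ∀ p ∈ I, ∑ q ∈ I, (starRingEnd ℂ) (lam p) * lam q * (if p = q then a 0 0 else 0)
      = ((‖lam p‖^2 : ℝ) : ℂ) * a 0 0 := by
    intro p hp
    rw [Finset.sum_eq_single p (fun q _ hq => by rw [if_neg (fun h => hq h.symm), mul_zero])
      (fun h => absurd hp h)]
    rw [if_pos rfl, hconj p]
  have h1 : ∑ p ∈ I, ∑ q ∈ I, (starRingEnd ℂ) (lam p) * lam q * a p q
      = (∑ p ∈ I, ∑ q ∈ I, (starRingEnd ℂ) (lam p) * lam q * b p q)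
        + (∑ p ∈ I, ((‖lam p‖^2 : ℝ) : ℂ)) * a 0 0 := by
    rw [Finset.sum_mul, ← Finset.sum_add_distrib]
    refine Finset.sum_congr rfl ?_
    intro p hp
    rw [← hdiag p hp, ← Finset.sum_add_distrib]
    refine Finset.sum_congr rfl ?_
    intro q hq
    rw [habe p q]; ring
  have h2 : (2 * π * θ : ℂ) * ∑ p ∈ I, ((‖lam p‖^2 : ℝ) : ℂ) = 1 := by
    calc (2 * π * θ : ℂ) * ∑ p ∈ I, ((‖lam p‖^2 : ℝ) : ℂ)
        = ((2 * π * θ * ∑ p ∈ I, ‖lam p‖^2 : ℝ) : ℂ) := by push_cast; ring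
      _ = 1 := by rw [hunit]; norm_num
  have hann : a n n = b n n + a 0 0 := by simp [hb]
  have hsplit : (2 * π * θ : ℂ) * (∑ p ∈ I, ∑ q ∈ I,
        (starRingEnd ℂ) (lam p) * lam q * a p q) - a n n
      = (2 * π * θ : ℂ) * (∑ p ∈ I, ∑ q ∈ I,
        (starRingEnd ℂ) (lam p) * lam q * b p q) - b n n := by
    rw [h1, hann, mul_add, ← mul_assoc, h2, one_mul]
    ring
  rw [hsplit]
  have hnorm2 : ‖(2 * π * θ : ℂ)‖ = 2 * π * θ := by
    rw [show (2 * π * θ : ℂ) = ((2 * π * θ : ℝ) : ℂ) by push_cast; ring,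
      Complex.norm_real, Real.norm_eq_abs, _root_.abs_of_pos (by positivity)]
  refine (norm_sub_le _ _).trans ?_
  have hA : ‖(2 * π * θ : ℂ) * ∑ p ∈ I, ∑ q ∈ I, (starRingEnd ℂ) (lam p) * lam q * b p q‖
      ≤ 2 * π * θ * ∑ p ∈ I, ∑ q ∈ I,
        ‖lam p‖ * ‖lam q‖ * (Real.sqrt θ * (min p q + 1)) := by
    rw [norm_mul, hnorm2]
    refine mul_le_mul_of_nonneg_left ?_ (by positivity)
    refine (norm_sum_le _ _).trans ?_
    refine Finset.sum_le_sum ?_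
    intro p hp
    refine (norm_sum_le _ _).trans ?_
    refine Finset.sum_le_sum ?_
    intro q hq
    rw [norm_mul, norm_mul, RCLike.norm_conj]
    exact mul_le_mul_of_nonneg_left (hbound p q) (by positivity)
  have hB : ‖b n n‖ ≤ Real.sqrt θ * (n + 1) := by simpa using hbound n n
  linarith
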